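/- Let V ∈ ℂ^{n×n} be invertible, let A₁,…,A_N ∈ ℝ^{n×n}, set Λ_i = V⁻¹ A_i V, M_i = 𝓜(Λ_i), and Λ = max_i M_i (entrywise maximum). Suppose Λ̄ ∈ ℝ^{n×n} is Hurwitz with Λ̄ ⪰ Λ and D > 0 is a diagonal matrix with Λ̄'D + DΛ̄ < 0. Then the real symmetric matrix P = Re((V⁻¹)* D V⁻¹) is positive definite and satisfies A_i'P + P A_i < 0 for all i, i.e., P defines a common quadratic Lyapunov function for the A_i. -/

import Mathlib

open Matrix

/-- If `Λ_i = V⁻¹ A_i V`, `M_i = 𝓜(Λ_i)`, `Λ = max_i M_i`, `Λ̄ ⪰ Λ` is Hurwitz and `D > 0`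
diagonal satisfies `Λ̄'D + DΛ̄ < 0`, then `P = Re((V⁻¹)* D V⁻¹)` is symmetric positive definite
and satisfies `A_i'P + P A_i < 0` for all `i` (a common quadratic Lyapunov function). -/
theorem cqlf_from_diag_lyapunov {n N : ℕ}
    (hne : (Finset.univ : Finset (Fin N)).Nonempty)
    (V : Matrix (Fin n) (Fin n) ℂ) (hV : IsUnit V.det)
    (A : Fin N → Matrix (Fin n) (Fin n) ℝ)
    (Λi : Fin N → Matrix (Fin n) (Fin n) ℂ)
    (hΛi : ∀ i, Λi i = V⁻¹ * (A i).map Complex.ofReal * V)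
    (M : Fin N → Matrix (Fin n) (Fin n) ℝ)
    (hM : ∀ i a b, M i a b = if a = b then (Λi i a a).re else ‖Λi i a b‖)
    (Λ : Matrix (Fin n) (Fin n) ℝ)
    (hΛ : ∀ a b, Λ a b = Finset.univ.sup' hne (fun i => M i a b))
    (Λb : Matrix (Fin n) (Fin n) ℝ)
    (hHur : ∀ μ ∈ spectrum ℂ (Λb.map Complex.ofReal), μ.re < 0)
    (hge : ∀ a b, Λ a b ≤ Λb a b)
    (d : Fin n → ℝ) (hd : ∀ i, 0 < d i)
    (hLyap : (-(Λbᵀ * Matrix.diagonal d + Matrix.diagonal d * Λb)).PosDef)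
    (P : Matrix (Fin n) (Fin n) ℝ)
    (hP : P = ((V⁻¹)ᴴ * (Matrix.diagonal d).map Complex.ofReal * V⁻¹).map Complex.re) :
    P.IsSymm ∧ P.PosDef ∧ ∀ i, (-((A i)ᵀ * P + P * A i)).PosDef := by
  classical
  set Dc : Matrix (Fin n) (Fin n) ℂ := (Matrix.diagonal d).map Complex.ofReal with hDc
  have hDcdiag : Dc = Matrix.diagonal (fun j => (d j : ℂ)) := by
    rw [hDc]; exact Matrix.diagonal_map (by simp)
  set Nc : Matrix (Fin n) (Fin n) ℂ := (V⁻¹)ᴴ * Dc * V⁻¹ with hNc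
  have hNherm : Nc.IsHermitian := by
    have hDherm : Dc.IsHermitian := by
      rw [hDcdiag]
      exact Matrix.isHermitian_diagonal_iff.mpr fun i => Complex.conj_ofReal (d i)
    have := Matrix.isHermitian_conjTranspose_mul_mul (A := Dc) V⁻¹ hDherm
    simpa [hNc, Matrix.mul_assoc] using this
  -- symmetry of P
  have hPsymm : P.IsSymm := by
    rw [hP]
    ext a b
    have h := hNherm.apply b a
    simp only [Matrix.transpose_apply, Matrix.map_apply]
    rw [← h]
    simp [Complex.conj_re]
  -- the quadratic form identity
  have hre : ∀ u v : Fin n → ℝ,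
      u ⬝ᵥ P *ᵥ v =
        (star (V⁻¹ *ᵥ fun j => (u j : ℂ)) ⬝ᵥ Dc *ᵥ (V⁻¹ *ᵥ fun j => (v j : ℂ))).re := by
    intro u v
    have hsu : star (fun j => ((u j : ℝ) : ℂ)) = fun j => ((u j : ℝ) : ℂ) := by
      funext j; simp [Complex.conj_ofReal]
    have h1 : star (V⁻¹ *ᵥ fun j => (u j : ℂ)) ⬝ᵥ Dc *ᵥ (V⁻¹ *ᵥ fun j => (v j : ℂ))
        = (fun j => ((u j : ℝ) : ℂ)) ⬝ᵥ Nc *ᵥ (fun j => ((v j : ℝ) : ℂ)) := by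
      rw [Matrix.star_mulVec, hsu, hNc]
      simp only [Matrix.dotProduct_mulVec, Matrix.vecMul_vecMul, Matrix.mul_assoc]
    rw [h1, hP]
    simp only [dotProduct, mulVec, Matrix.map_apply, Finset.mul_sum, Complex.re_sum]
    refine Finset.sum_congr rfl fun j _ => Finset.sum_congr rfl fun k _ => ?_
    have : ((u j : ℂ) * (Nc j k * (v k : ℂ))) = ((u j * v k : ℝ) : ℂ) * Nc j k := by
      push_cast; ring
    rw [this, Complex.re_ofReal_mul]
    ring
  -- z ≠ 0 for x ≠ 0
  have hz0 : ∀ x : Fin n → ℝ, x ≠ 0 → (V⁻¹ *ᵥ fun j => (x j : ℂ)) ≠ 0 := by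
    intro x hx h0
    apply hx
    have hVV : V * V⁻¹ = 1 := Matrix.mul_nonsing_inv V hV
    have : (fun j => ((x j : ℝ) : ℂ)) = 0 := by
      have h1 : V *ᵥ (V⁻¹ *ᵥ fun j => (x j : ℂ)) = (fun j => ((x j : ℝ) : ℂ)) := by
        rw [Matrix.mulVec_mulVec, hVV, Matrix.one_mulVec]
      rw [h0] at h1
      rw [← h1, Matrix.mulVec_zero]
    funext j
    have := congrFun this j
    simpa using congrArg Complex.re this
  -- positive definiteness of P
  have hPpos : P.PosDef := by
    have hPh : P.IsHermitian := by
      ext a b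
      rw [Matrix.conjTranspose_apply, star_trivial]
      have h := congrFun (congrFun hPsymm a) b
      rw [Matrix.transpose_apply] at h
      exact h
    refine Matrix.posDef_iff_dotProduct_mulVec.mpr ⟨hPh, fun x hx => ?_⟩
    set z := V⁻¹ *ᵥ fun j => (x j : ℂ) with hzdef
    have hz := hz0 x hx
    have hform : star x ⬝ᵥ P *ᵥ x = ∑ j, d j * Complex.normSq (z j) := by
      have : star x = x := by funext j; simp
      rw [this, hre x x, hDcdiag]
      simp only [dotProduct, Matrix.mulVec_diagonal, Complex.re_sum, Pi.star_apply,
        Complex.star_def]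
      refine Finset.sum_congr rfl fun j _ => ?_
      have : (starRingEnd ℂ) (z j) * ((d j : ℂ) * z j)
          = (d j : ℂ) * (Complex.normSq (z j) : ℂ) := by
        rw [show (starRingEnd ℂ) (z j) * ((d j : ℂ) * z j)
            = (d j : ℂ) * (z j * (starRingEnd ℂ) (z j)) by ring, Complex.mul_conj]
      rw [← hzdef, this, ← Complex.ofReal_mul, Complex.ofReal_re]
    rw [hform]
    obtain ⟨j, hj⟩ := Function.ne_iff.mp hz
    refine Finset.sum_pos' (fun k _ => ?_) ⟨j, Finset.mem_univ j, ?_⟩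
    · exact mul_nonneg (hd k).le (Complex.normSq_nonneg _)
    · exact mul_pos (hd j) (Complex.normSq_pos.mpr (by simpa using hj))
  refine ⟨hPsymm, hPpos, fun i => ?_⟩
  -- Hermitian part
  have hsymm2 : ((A i)ᵀ * P + P * A i)ᵀ = (A i)ᵀ * P + P * A i := by
    rw [Matrix.transpose_add, Matrix.transpose_mul, Matrix.transpose_mul,
      Matrix.transpose_transpose, hPsymm.eq, add_comm]
  refine Matrix.posDef_iff_dotProduct_mulVec.mpr ⟨?_, ?_⟩
  · show (-((A i)ᵀ * P + P * A i))ᴴ = _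
    ext a b
    rw [Matrix.conjTranspose_apply, star_trivial]
    have h := congrFun (congrFun hsymm2 b) a
    rw [Matrix.transpose_apply] at h
    simp only [Matrix.neg_apply, Matrix.add_apply] at h ⊢
    linarith
  intro x hx
  have hstarx : star x = x := by funext j; simp
  set xc : Fin n → ℂ := fun j => (x j : ℂ) with hxc
  set z := V⁻¹ *ᵥ xc with hzdef
  have hz := hz0 x hx
  set w : Fin n → ℝ := fun j => ‖z j‖ with hwdef
  have hwne : w ≠ 0 := by
    obtain ⟨j, hj⟩ := Function.ne_iff.mp hz
    exact Function.ne_iff.mpr ⟨j, by simpa [hwdef] using hj⟩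
  -- key reduction of quadratic form
  have hbil : ∀ u v : Fin n → ℝ, u ⬝ᵥ P *ᵥ v = v ⬝ᵥ P *ᵥ u := by
    intro u v
    simp only [dotProduct, mulVec, Finset.mul_sum]
    rw [Finset.sum_comm]
    refine Finset.sum_congr rfl fun j _ => Finset.sum_congr rfl fun k _ => ?_
    have h := congrFun (congrFun hPsymm k) j
    rw [Matrix.transpose_apply] at h
    rw [h]; ring
  have hkey : x ⬝ᵥ (((A i)ᵀ * P + P * A i) *ᵥ x) = 2 * (x ⬝ᵥ P *ᵥ (A i *ᵥ x)) := by
    rw [Matrix.add_mulVec, dotProduct_add, ← Matrix.mulVec_mulVec,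
      Matrix.dotProduct_mulVec x ((A i)ᵀ), Matrix.vecMul_transpose,
      ← Matrix.mulVec_mulVec, hbil (A i *ᵥ x) x]
    ring
  -- V⁻¹ (A x) = Λi z
  have hAz : (V⁻¹ *ᵥ fun j => ((A i *ᵥ x) j : ℂ)) = Λi i *ᵥ z := by
    have h1 : (fun j => (((A i *ᵥ x) j : ℝ) : ℂ)) = ((A i).map Complex.ofReal) *ᵥ xc := by
      funext j
      simp only [mulVec, dotProduct, Matrix.map_apply, hxc]
      push_cast
      rfl
    have hVV : V * V⁻¹ = 1 := Matrix.mul_nonsing_inv V hV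
    have h2 : V⁻¹ * (A i).map Complex.ofReal = Λi i * V⁻¹ := by
      rw [hΛi i, Matrix.mul_assoc, Matrix.mul_assoc, hVV, Matrix.mul_one]
    rw [h1, Matrix.mulVec_mulVec, h2, ← Matrix.mulVec_mulVec, ← hzdef]
  -- the sum form
  have hform : x ⬝ᵥ P *ᵥ (A i *ᵥ x)
      = ∑ j, ∑ k, d j * ((starRingEnd ℂ) (z j) * (Λi i j k * z k)).re := by
    rw [hre x (A i *ᵥ x), hAz, ← hzdef, hDcdiag]
    have hD : (Matrix.diagonal (fun j => (d j : ℂ))) *ᵥ (Λi i *ᵥ z)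
        = fun j => (d j : ℂ) * (Λi i *ᵥ z) j := by
      funext j; exact Matrix.mulVec_diagonal _ _ _
    rw [hD]
    simp only [dotProduct, Pi.star_apply, Complex.star_def]
    rw [Complex.re_sum]
    refine Finset.sum_congr rfl fun j _ => ?_
    have hrow : (Λi i *ᵥ z) j = ∑ k, Λi i j k * z k := by simp [mulVec, dotProduct]
    rw [hrow, Finset.mul_sum, Finset.mul_sum, Complex.re_sum]
    refine Finset.sum_congr rfl fun k _ => ?_
    rw [show (starRingEnd ℂ) (z j) * ((d j : ℂ) * (Λi i j k * z k))
        = ((d j : ℝ) : ℂ) * ((starRingEnd ℂ) (z j) * (Λi i j k * z k)) by ring,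
      Complex.re_ofReal_mul]
  -- termwise bound
  have hterm : ∀ j k, ((starRingEnd ℂ) (z j) * (Λi i j k * z k)).re ≤ M i j k * (w j * w k) := by
    intro j k
    by_cases hjk : j = k
    · subst hjk
      have h1 : (starRingEnd ℂ) (z j) * (Λi i j j * z j)
          = Λi i j j * ((Complex.normSq (z j) : ℝ) : ℂ) := by
        rw [show (starRingEnd ℂ) (z j) * (Λi i j j * z j)
            = Λi i j j * (z j * (starRingEnd ℂ) (z j)) by ring, Complex.mul_conj]
      rw [h1, mul_comm, Complex.re_ofReal_mul, hM i j j, if_pos rfl, hwdef]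
      have : ‖z j‖ * ‖z j‖ = Complex.normSq (z j) := by
        rw [← Complex.sq_norm]; ring
      rw [this]; ring_nf; exact le_refl _
    · rw [hM i j k, if_neg hjk]
      calc ((starRingEnd ℂ) (z j) * (Λi i j k * z k)).re
          ≤ ‖(starRingEnd ℂ) (z j) * (Λi i j k * z k)‖ := Complex.re_le_norm _
        _ = ‖Λi i j k‖ * (w j * w k) := by
            simp only [norm_mul, Complex.norm_conj, hwdef]; ring
  -- sum bound
  have hMb : ∀ j k, M i j k ≤ Λb j k := fun j k =>
    le_trans (by rw [hΛ j k]; exact Finset.le_sup' (fun i => M i j k) (Finset.mem_univ i))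
      (hge j k)
  have hwnn : ∀ j, 0 ≤ w j := fun j => norm_nonneg _
  have hsum : x ⬝ᵥ P *ᵥ (A i *ᵥ x) ≤ ∑ j, ∑ k, d j * (Λb j k * (w j * w k)) := by
    rw [hform]
    refine Finset.sum_le_sum fun j _ => Finset.sum_le_sum fun k _ => ?_
    have h1 : ((starRingEnd ℂ) (z j) * (Λi i j k * z k)).re ≤ Λb j k * (w j * w k) :=
      le_trans (hterm j k)
        (mul_le_mul_of_nonneg_right (hMb j k) (mul_nonneg (hwnn j) (hwnn k)))
    exact mul_le_mul_of_nonneg_left h1 (hd j).le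
  -- the Lyapunov inequality on w
  have hT : w ⬝ᵥ ((Λbᵀ * Matrix.diagonal d + Matrix.diagonal d * Λb) *ᵥ w)
      = 2 * ∑ j, ∑ k, d j * (Λb j k * (w j * w k)) := by
    simp only [Matrix.add_mulVec, dotProduct_add, dotProduct, mulVec,
      Matrix.mul_diagonal, Matrix.diagonal_mul, Matrix.transpose_apply, Finset.mul_sum]
    have e1 : ∀ j k, w j * ((Λbᵀ * Matrix.diagonal d + Matrix.diagonal d * Λb) j k * w k)
        = w j * (Λb k j * d k * w k) + d j * (Λb j k * (w j * w k)) := by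
      intro j k
      rw [Matrix.add_apply, Matrix.mul_diagonal, Matrix.diagonal_mul, Matrix.transpose_apply]
      ring
    simp only [e1, Finset.sum_add_distrib]
    rw [Finset.sum_comm (s := Finset.univ) (t := Finset.univ)
      (f := fun j k => w j * (Λb k j * d k * w k))]
    rw [← Finset.sum_add_distrib]
    refine Finset.sum_congr rfl fun j _ => ?_
    rw [← Finset.sum_add_distrib]
    refine Finset.sum_congr rfl fun k _ => ?_
    ring
  have hLy := (Matrix.posDef_iff_dotProduct_mulVec.mp hLyap).2 hwne
  rw [show star w = w from funext fun j => by simp] at hLy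
  rw [Matrix.neg_mulVec, dotProduct_neg] at hLy
  rw [hT] at hLy
  -- conclude
  rw [hstarx, Matrix.neg_mulVec, dotProduct_neg, hkey]
  linarith
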